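/- Let K be a field of characteristic zero, n, m ≥ 2, and let p ∈ K[x] be monic of degree n with p = c^n for some c = x + c_0 + c_{-1}x^{-1} + ⋯ ∈ K((x^{-1})). Suppose the polynomial part q ∈ K[x] of c^m (so f := c^m − q has deg f < 0) satisfies: the coefficient of x^{-k} in c^m vanishes for k = 1, …, n−2 and the coefficient of x^{1-n} in c^m is λ ∈ K^×. Then p^m − q^n = nλ x^{mn−m−n+1} + terms of lower degree. -/

import Mathlib

open Polynomial HahnSeries Finset

noncomputable section

/-- The embedding `K[x] → K((x⁻¹))` sending `x` to `x = (x⁻¹)⁻¹`, where the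
Hahn series variable `t` is `x⁻¹`, so `x` corresponds to `single (-1) 1`. -/
def embX (K : Type*) [Field K] : Polynomial K →ₐ[K] LaurentSeries K :=
  Polynomial.aeval (HahnSeries.single (-1 : ℤ) (1 : K))

section Aux

variable {K : Type*} [Field K]

lemma algK (a : K) :
    (algebraMap K (LaurentSeries K)) a = HahnSeries.single (0 : ℤ) a := by
  simp [HahnSeries.algebraMap_apply', PowerSeries.algebraMap_apply, HahnSeries.ofPowerSeries_C,
    HahnSeries.C_apply]

lemma mul_coeff_bd (a b : LaurentSeries K) (A B j : ℤ)
    (ha : ∀ i < A, a.coeff i = 0) (hb : ∀ i < B, b.coeff i = 0) (hj : j < A + B) :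
    (a * b).coeff j = 0 := by
  rw [HahnSeries.coeff_mul]
  refine Finset.sum_eq_zero fun ij hij => ?_
  rw [Finset.mem_addAntidiagonal] at hij
  obtain ⟨h1, h2, h3⟩ := hij
  rw [HahnSeries.mem_support] at h1 h2
  by_cases hA : ij.1 < A
  · exact absurd (ha _ hA) h1
  · have hB : ij.2 < B := by omega
    exact absurd (hb _ hB) h2

lemma mul_coeff_lead (a b : LaurentSeries K) (A B : ℤ)
    (ha : ∀ i < A, a.coeff i = 0) (hb : ∀ i < B, b.coeff i = 0) :
    (a * b).coeff (A + B) = a.coeff A * b.coeff B := by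
  rw [HahnSeries.coeff_mul]
  refine Finset.sum_eq_single (A, B) ?_ ?_
  · intro ij hij hne
    rw [Finset.mem_addAntidiagonal] at hij
    obtain ⟨h1, h2, h3⟩ := hij
    rw [HahnSeries.mem_support] at h1 h2
    have hA : ¬ ij.1 < A := fun h => h1 (ha _ h)
    have hB : ¬ ij.2 < B := fun h => h2 (hb _ h)
    exact absurd (Prod.ext (by omega) (by omega)) hne
  · intro h
    rw [Finset.mem_addAntidiagonal] at h
    push_neg at h
    by_cases h1 : a.coeff A = 0
    · rw [h1, zero_mul]
    by_cases h2 : b.coeff B = 0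
    · rw [h2, mul_zero]
    exact absurd rfl (h (HahnSeries.mem_support a A |>.mpr h1)
      (HahnSeries.mem_support b B |>.mpr h2))

lemma pow_coeff_bd (a : LaurentSeries K) (A : ℤ)
    (ha : ∀ i < A, a.coeff i = 0) (k : ℕ) :
    ∀ j < (k : ℤ) * A, (a ^ k).coeff j = 0 := by
  induction k with
  | zero =>
    intro j hj
    simp only [Nat.cast_zero, zero_mul] at hj
    simp [HahnSeries.coeff_one, hj.ne]
  | succ k ih =>
    intro j hj
    rw [pow_succ]
    refine mul_coeff_bd _ _ ((k : ℤ) * A) A j ih ha ?_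
    push_cast at hj ⊢
    linarith

lemma pow_coeff_lead (a : LaurentSeries K) (A : ℤ)
    (ha : ∀ i < A, a.coeff i = 0) (k : ℕ) :
    (a ^ k).coeff ((k : ℤ) * A) = (a.coeff A) ^ k := by
  induction k with
  | zero => simp [HahnSeries.coeff_one]
  | succ k ih =>
    rw [pow_succ, pow_succ, ← ih]
    have h : ((k : ℤ) + 1) * A = (k : ℤ) * A + A := by ring
    rw [Nat.cast_succ, h]
    exact mul_coeff_lead _ _ _ _ (pow_coeff_bd a A ha k) ha

lemma embX_coeff (p : Polynomial K) (j : ℤ) :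
    (embX K p).coeff j = if j ≤ 0 then p.coeff (-j).toNat else 0 := by
  induction p using Polynomial.induction_on' with
  | add p q hp hq =>
    rw [map_add, HahnSeries.coeff_add, hp, hq]
    split <;> simp
  | monomial k a =>
    have h : embX K (Polynomial.monomial k a) = HahnSeries.single (-(k : ℤ)) a := by
      rw [embX, Polynomial.aeval_monomial, HahnSeries.single_pow, one_pow, algK,
        HahnSeries.single_mul_single, zero_add, mul_one]
      congr 1
      simp
    rw [h]
    by_cases hjk : j = -(k : ℤ)
    · subst hjk
      rw [HahnSeries.coeff_single_same, if_pos (by omega)]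
      simp [Polynomial.coeff_monomial]
    · rw [HahnSeries.coeff_single_of_ne hjk]
      split
      · rw [Polynomial.coeff_monomial, if_neg (by omega)]
      · rfl

lemma embX_coeff_neg (p : Polynomial K) (k : ℕ) :
    (embX K p).coeff (-(k : ℤ)) = p.coeff k := by
  rw [embX_coeff, if_pos (by omega)]
  congr 1
  omega

lemma embX_coeff_pos (p : Polynomial K) (j : ℤ) (hj : 0 < j) :
    (embX K p).coeff j = 0 := by
  rw [embX_coeff, if_neg (by omega)]

lemma const_mul_coeff (r : K) (x : LaurentSeries K) (j : ℤ) :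
    ((algebraMap K (LaurentSeries K) r) * x).coeff j = r * x.coeff j := by
  rw [algK, HahnSeries.single_zero_mul_eq_smul, HahnSeries.coeff_smul, smul_eq_mul]

end Aux

/-- Let `n, m ≥ 2`, `p ∈ K[x]` monic of degree `n` with `p = c^n`
for some `c = x + c₀ + c₋₁x⁻¹ + ⋯ ∈ K((x⁻¹))`.  If the polynomial part
`q ∈ K[x]` of `c^m` satisfies: the coefficient of `x^{-k}` in `c^m` vanishes
for `k = 1, …, n−2` and the coefficient of `x^{1-n}` in `c^m` is `λ ∈ K^×`,
then `p^m − q^n = nλ x^{mn−m−n+1} +` lower order terms.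
The coefficient of `x^k` of a Laurent series `f` is `f.coeff (-k)`;
`mn−m−n+1 = (m-1)(n-1)`. -/
theorem statement9 (K : Type*) [Field K] [CharZero K] (n m : ℕ)
    (hn : 2 ≤ n) (hm : 2 ≤ m) (p q : Polynomial K) (hp : p.Monic) (hpn : p.natDegree = n)
    (c : LaurentSeries K)
    (hc1 : c.coeff (-1) = 1) (hc2 : ∀ j : ℤ, j < -1 → c.coeff j = 0)
    (hcn : c ^ n = embX K p)
    (hq : ∀ j : ℤ, j ≤ 0 → (c ^ m).coeff j = (embX K q).coeff j)
    (lam : K) (hlam : lam ≠ 0)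
    (hvan : ∀ k : ℕ, 1 ≤ k → k ≤ n - 2 → (c ^ m).coeff (k : ℤ) = 0)
    (hlead : (c ^ m).coeff ((n : ℤ) - 1) = lam) :
    (p ^ m - q ^ n - Polynomial.C ((n : K) * lam) * Polynomial.X ^ ((m - 1) * (n - 1))).degree <
      (((m - 1) * (n - 1) : ℕ) : WithBot ℕ) := by
  set D : ℕ := (m - 1) * (n - 1) with hD
  have hDcast : (D : ℤ) = ((m : ℤ) - 1) * ((n : ℤ) - 1) := by
    rw [hD]
    push_cast [Nat.cast_sub (by omega : 1 ≤ m), Nat.cast_sub (by omega : 1 ≤ n)]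
    ring
  set f : LaurentSeries K := c ^ m - embX K q with hf
  have hcb : ∀ i < (-1 : ℤ), c.coeff i = 0 := hc2
  have hfb : ∀ j < (n : ℤ) - 1, f.coeff j = 0 := by
    intro j hj
    rw [hf, HahnSeries.coeff_sub]
    by_cases hj0 : j ≤ 0
    · rw [hq j hj0, sub_self]
    · push_neg at hj0
      obtain ⟨k, rfl⟩ : ∃ k : ℕ, j = (k : ℤ) := ⟨j.toNat, by omega⟩
      rw [hvan k (by omega) (by omega), embX_coeff_pos q _ hj0, sub_self]
  have hflead : f.coeff ((n : ℤ) - 1) = lam := by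
    rw [hf, HahnSeries.coeff_sub, hlead, embX_coeff_pos q _ (by omega), sub_zero]
  have hqe : embX K q = c ^ m - f := by rw [hf]; ring
  have hcpow : ∀ k : ℕ, ∀ j : ℤ, j < -(k : ℤ) → (c ^ k).coeff j = 0 := by
    intro k j hj
    refine pow_coeff_bd c (-1) hcb k j ?_
    omega
  have hcpowlead : ∀ k : ℕ, (c ^ k).coeff (-(k : ℤ)) = 1 := by
    intro k
    have h := pow_coeff_lead c (-1) hcb k
    rw [hc1, one_pow] at h
    rw [← h]
    congr 1
    omega
  have hfpow : ∀ i : ℕ, ∀ j : ℤ, j < (i : ℤ) * ((n : ℤ) - 1) → (f ^ i).coeff j = 0 :=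
    fun i => pow_coeff_bd f ((n : ℤ) - 1) hfb i
  rw [Polynomial.degree_lt_iff_coeff_zero]
  intro k hk
  -- the key coefficient computation
  have hkey : (p ^ m - q ^ n).coeff k = if k = D then (n : K) * lam else 0 := by
    have h1 : (p ^ m - q ^ n).coeff k = (embX K (p ^ m - q ^ n)).coeff (-(k : ℤ)) :=
      (embX_coeff_neg _ k).symm
    rw [h1, map_sub, map_pow, map_pow, ← hcn, hqe, ← pow_mul, sub_pow (c ^ m) f n,
      HahnSeries.coeff_sub]
    have hsum : (∑ i ∈ range (n + 1),
        (-1 : LaurentSeries K) ^ (i + n) * (c ^ m) ^ i * f ^ (n - i)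
          * (n.choose i : LaurentSeries K)).coeff (-(k : ℤ)) =
        ∑ i ∈ range (n + 1),
        ((-1 : LaurentSeries K) ^ (i + n) * (c ^ m) ^ i * f ^ (n - i)
          * (n.choose i : LaurentSeries K)).coeff (-(k : ℤ)) :=
      map_sum (HahnSeries.coeff.addMonoidHom (-(k : ℤ))) _ _
    rw [hsum]
    have hterm : ∀ i ∈ range (n + 1),
        ((-1 : LaurentSeries K) ^ (i + n) * (c ^ m) ^ i * f ^ (n - i)
          * (n.choose i : LaurentSeries K)).coeff (-(k : ℤ)) =
        ((-1 : K) ^ (i + n) * (n.choose i : K))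
          * ((c ^ m) ^ i * f ^ (n - i)).coeff (-(k : ℤ)) := by
      intro i _
      have h2 : (-1 : LaurentSeries K) ^ (i + n) * (c ^ m) ^ i * f ^ (n - i)
          * (n.choose i : LaurentSeries K) =
          (algebraMap K (LaurentSeries K) ((-1 : K) ^ (i + n) * (n.choose i : K)))
            * ((c ^ m) ^ i * f ^ (n - i)) := by
        rw [map_mul, map_pow, map_neg, map_one, map_natCast]
        ring
      rw [h2, const_mul_coeff]
    rw [Finset.sum_congr rfl hterm]
    -- terms with at least two factors of f vanish
    have hg2 : ∀ i : ℕ, i + 2 ≤ n → ((c ^ m) ^ i * f ^ (n - i)).coeff (-(k : ℤ)) = 0 := by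
      intro i hi
      rw [← pow_mul]
      refine mul_coeff_bd _ _ (-((m * i : ℕ) : ℤ)) (((n - i : ℕ) : ℤ) * ((n : ℤ) - 1)) _
        (hcpow (m * i)) (hfpow (n - i)) ?_
      have hk' : (D : ℤ) ≤ (k : ℤ) := by exact_mod_cast hk
      rw [hDcast] at hk'
      have hni : ((n - i : ℕ) : ℤ) = (n : ℤ) - i := by omega
      rw [hni]
      push_cast
      nlinarith [hk', mul_pos (show (0:ℤ) < (n : ℤ) - (i : ℤ) - 1 by omega)
        (show (0:ℤ) < (m : ℤ) + (n : ℤ) - 1 by omega)]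
    -- the term with one factor of f
    have hg1 : ((c ^ m) ^ (n - 1) * f ^ (n - (n - 1))).coeff (-(k : ℤ)) =
        if k = D then lam else 0 := by
      have hnn : n - (n - 1) = 1 := by omega
      rw [hnn, pow_one, ← pow_mul]
      have h3 : ((m * (n - 1) : ℕ) : ℤ) = (m : ℤ) * ((n : ℤ) - 1) := by
        push_cast [Nat.cast_sub (by omega : 1 ≤ n)]; ring
      by_cases hkD : k = D
      · rw [if_pos hkD, hkD]
        have h5 : -((m : ℤ) * ((n : ℤ) - 1)) + ((n : ℤ) - 1) = -(D : ℤ) := by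
          rw [hDcast]; ring
        have hAB : -((D : ℤ)) = -((m * (n - 1) : ℕ) : ℤ) + ((n : ℤ) - 1) := by
          rw [h3]; linarith [h5]
        rw [hAB, mul_coeff_lead _ _ _ _ (hcpow (m * (n - 1))) hfb,
          hcpowlead, hflead, one_mul]
      · rw [if_neg hkD]
        refine mul_coeff_bd _ _ (-((m * (n - 1) : ℕ) : ℤ)) ((n : ℤ) - 1) _
          (hcpow (m * (n - 1))) hfb ?_
        have hk' : (D : ℤ) ≤ (k : ℤ) := by exact_mod_cast hk
        have hlt : (D : ℤ) < (k : ℤ) := by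
          rcases lt_or_eq_of_le hk' with h | h
          · exact h
          · exact absurd (by exact_mod_cast h.symm) hkD
        have h5 : -((m : ℤ) * ((n : ℤ) - 1)) + ((n : ℤ) - 1) = -(D : ℤ) := by
          rw [hDcast]; ring
        rw [h3, h5]
        omega
    -- the top term i = n
    have hgn : ((c ^ m) ^ n * f ^ (n - n)).coeff (-(k : ℤ)) = (c ^ (n * m)).coeff (-(k : ℤ)) := by
      rw [Nat.sub_self, pow_zero, mul_one, ← pow_mul, mul_comm m n]
    -- now split the sum
    have hsplit : n + 1 = (n - 1) + 1 + 1 := by omega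
    rw [hsplit, Finset.sum_range_succ, Finset.sum_range_succ]
    have hpeel1 : (n - 1) + 1 = n := by omega
    rw [hpeel1]
    have hrest : ∑ i ∈ range (n - 1),
        ((-1 : K) ^ (i + n) * (n.choose i : K))
          * ((c ^ m) ^ i * f ^ (n - i)).coeff (-(k : ℤ)) = 0 := by
      refine Finset.sum_eq_zero fun i hi => ?_
      rw [Finset.mem_range] at hi
      rw [hg2 i (by omega), mul_zero]
    rw [hrest, zero_add, hg1, hgn]
    have hsign : ((-1 : K) ^ (n + n) * (n.choose n : K)) = 1 := by
      rw [← two_mul, pow_mul, neg_one_sq, one_pow, Nat.choose_self, Nat.cast_one, one_mul]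
    have hsign1 : ((-1 : K) ^ ((n - 1) + n) * (n.choose (n - 1) : K)) = -(n : K) := by
      have h4 : (n - 1) + n = 2 * (n - 1) + 1 := by omega
      rw [h4, pow_succ, pow_mul, neg_one_sq, one_pow, one_mul,
        Nat.choose_symm (by omega : 1 ≤ n), Nat.choose_one_right]
      ring
    rw [hsign, one_mul, hsign1]
    by_cases hkD : k = D <;> simp [hkD] <;> ring
  rw [Polynomial.coeff_sub, hkey, Polynomial.coeff_C_mul, Polynomial.coeff_X_pow]
  by_cases hkD : k = D <;> simp [hkD]

end
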